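/- Let W be a block lower-triangular row-stochastic matrix of the form [[I_p, 0],[W_qp, W_qq]] where W_qq is convergent (W_qq^t → 0). Then for any initial matrix Y^{(0)} = [Y_p; Y_q^{(0)}] with the top p rows fixed, the iteration Y^{(t+1)} = W Y^{(t)} converges, and the limit of the bottom block is (I − W_qq)^{−1} W_qp Y_p, independent of the initialization Y_q^{(0)}. -/

import Mathlib

open Filter

/-- Block lower-triangular row-stochastic iteration: with top block
identity and convergent bottom-right block `Wqq`, the iteration
`Yq^{(t+1)} = Wqp * Yp + Wqq * Yq^{(t)}` converges to `(I - Wqq)⁻¹ * Wqp * Yp`,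
independent of the initialization. -/
theorem stmt_6 (p q s : ℕ)
    (Wqp : Matrix (Fin q) (Fin p) ℝ) (Wqq : Matrix (Fin q) (Fin q) ℝ)
    (hqp : ∀ i j, 0 ≤ Wqp i j) (hqq : ∀ i j, 0 ≤ Wqq i j)
    (hrow : ∀ i, (∑ j, Wqp i j) + (∑ j, Wqq i j) = 1)
    (hconv : Tendsto (fun t => Wqq ^ t) atTop (nhds 0))
    (Yp : Matrix (Fin p) (Fin s) ℝ)
    (Yq : ℕ → Matrix (Fin q) (Fin s) ℝ)
    (hiter : ∀ t, Yq (t + 1) = Wqp * Yp + Wqq * Yq t) :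
    Tendsto Yq atTop (nhds ((1 - Wqq)⁻¹ * (Wqp * Yp))) := by
  -- (1 - Wqq) is invertible
  have hdet : (1 - Wqq).det ≠ 0 := by
    intro hd
    obtain ⟨v, hv, hmv⟩ := (Matrix.exists_mulVec_eq_zero_iff).2 hd
    have hfix : Wqq.mulVec v = v := by
      have := sub_eq_zero.mpr (rfl : (1 - Wqq).mulVec v = (1 - Wqq).mulVec v)
      have h1 : (1 : Matrix (Fin q) (Fin q) ℝ).mulVec v - Wqq.mulVec v = 0 := by
        rw [← Matrix.sub_mulVec]; exact hmv
      have := sub_eq_zero.mp h1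
      simpa [Matrix.one_mulVec] using this.symm
    have hpow : ∀ t, (Wqq ^ t).mulVec v = v := by
      intro t
      induction t with
      | zero => simp [Matrix.one_mulVec]
      | succ n ih => rw [pow_succ', ← Matrix.mulVec_mulVec, ih, hfix]
    have hcont : Tendsto (fun t => (Wqq ^ t).mulVec v) atTop
        (nhds ((0 : Matrix (Fin q) (Fin q) ℝ).mulVec v)) := by
      exact ((Continuous.matrix_mulVec continuous_id continuous_const).tendsto 0).comp hconv
    have : Tendsto (fun _ : ℕ => v) atTop (nhds ((0 : Matrix (Fin q) (Fin q) ℝ).mulVec v)) := by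
      simpa [hpow] using hcont
    have hv0 : v = (0 : Matrix (Fin q) (Fin q) ℝ).mulVec v := tendsto_nhds_unique tendsto_const_nhds this
    apply hv
    simpa [Matrix.zero_mulVec] using hv0
  have key : (1 - Wqq) * ((1 - Wqq)⁻¹ * (Wqp * Yp)) = Wqp * Yp := by
    rw [← Matrix.mul_assoc, Matrix.mul_nonsing_inv _ (isUnit_iff_ne_zero.2 hdet), Matrix.one_mul]
  have hLfix : (1 - Wqq)⁻¹ * (Wqp * Yp)
      = Wqp * Yp + Wqq * ((1 - Wqq)⁻¹ * (Wqp * Yp)) := by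
    have h2 := key
    rw [Matrix.sub_mul, Matrix.one_mul, sub_eq_iff_eq_add] at h2
    exact h2
  generalize hG : (1 - Wqq)⁻¹ * (Wqp * Yp) = L at hLfix ⊢
  -- error term
  have herr : ∀ t, Yq t = L + (Wqq ^ t) * (Yq 0 - L) := by
    intro t
    induction t with
    | zero => simp
    | succ n ih =>
      rw [hiter n, ih, Matrix.mul_add, ← Matrix.mul_assoc, ← pow_succ', ← add_assoc, ← hLfix]
  have h0 : Tendsto (fun t => (Wqq ^ t) * (Yq 0 - L)) atTop (nhds 0) := by
    have hc : Continuous fun A : Matrix (Fin q) (Fin q) ℝ => A * (Yq 0 - L) :=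
      continuous_id.matrix_mul continuous_const
    have := (hc.tendsto 0).comp hconv
    simpa [Function.comp_def] using this
  have : Tendsto (fun t => L + (Wqq ^ t) * (Yq 0 - L)) atTop (nhds (L + 0)) :=
    tendsto_const_nhds.add h0
  simpa [← herr] using this
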